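/- Let A be a positive normalized linear functional on L, let n be odd, let f ∈ C^n([a,b]) be n-convex, let 3 ≤ m ≤ n−1 with m odd, and let g ∈ L with f∘g ∈ L. Then (A(g)−a)·(f[a,a] − f[a,b]) + Σ_{k=2}^{m-1} (f^{(k)}(a)/k!) · A[(g−a1)^k] + Σ_{k=1}^{n-m} f[a,…,a (m times); b,…,b (k times)] · A[(g−a1)^m (g−b1)^{k−1}] ≤ LR(f,g,a,b,A) ≤ (b−A(g))·(f[a,b] − f[b,b]) + Σ_{k=2}^{m-1} (f^{(k)}(b)/k!) · A[(g−b1)^k] + Σ_{k=1}^{n-m} f[b,…,b (m times); a,…,a (k times)] · A[(g−b1)^m (g−a1)^{k−1}]. -/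

import Mathlib

/-- Divided difference of `f` at a (sorted) list of points, with repeated points
handled via derivatives (taken within the set `s`). -/
noncomputable def divDiff (s : Set ℝ) (f : ℝ → ℝ) : List ℝ → ℝ
  | [] => 0
  | [x] => f x
  | x :: y :: l =>
    if x = (y :: l).getLast (List.cons_ne_nil y l) then
      iteratedDerivWithin (l.length + 1) f s x / Nat.factorial (l.length + 1)
    else
      (divDiff s f (y :: l) - divDiff s f (x :: (y :: l).dropLast)) /
        ((y :: l).getLast (List.cons_ne_nil y l) - x)
termination_by l => l.length
decreasing_by
  all_goals simp [List.length_dropLast]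

lemma divDiff_replicate (s : Set ℝ) (f : ℝ → ℝ) (c : ℝ) (k : ℕ) :
    divDiff s f (List.replicate (k+1) c) = iteratedDerivWithin k f s c / (Nat.factorial k) := by
  cases k with
  | zero => simp [divDiff, List.replicate]
  | succ k =>
    show divDiff s f (c :: c :: List.replicate k c) = _
    rw [divDiff, if_pos]
    · simp
    · exact (List.getLast_replicate (n := k+1) _).symm

lemma getLast?_rep_app (u v : ℕ) (a b : ℝ) :
    (List.replicate u a ++ List.replicate (v+1) b).getLast? = some b := by
  rw [List.replicate_succ', ← List.append_assoc, List.getLast?_concat]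

lemma divDiff_rec (s : Set ℝ) (f : ℝ → ℝ) {a b : ℝ} (hab : a ≠ b) (u v : ℕ) :
    divDiff s f (List.replicate (u+1) a ++ List.replicate (v+1) b) =
      (divDiff s f (List.replicate u a ++ List.replicate (v+1) b) -
        divDiff s f (List.replicate (u+1) a ++ List.replicate v b)) / (b - a) := by
  have hkey : ∀ (y : ℝ) (l : List ℝ), y :: l = List.replicate u a ++ List.replicate (v+1) b →
      divDiff s f (a :: y :: l) =
      (divDiff s f (y :: l) - divDiff s f (a :: (y :: l).dropLast)) / (b - a) := by
    intro y l hw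
    have hlast : (y :: l).getLast (List.cons_ne_nil y l) = b := by
      have h3 : (y :: l).getLast? = some b := by rw [hw]; exact getLast?_rep_app _ _ _ _
      rw [List.getLast?_eq_getLast (List.cons_ne_nil y l)] at h3
      exact Option.some_injective _ h3
    rw [divDiff, if_neg, hlast]
    rw [hlast]; exact hab
  have h1 : List.replicate (u+1) a ++ List.replicate (v+1) b
      = a :: (List.replicate u a ++ List.replicate (v+1) b) := rfl
  obtain ⟨y, l, hyl⟩ : ∃ y l, List.replicate u a ++ List.replicate (v+1) b = y :: l := by
    cases h : List.replicate u a ++ List.replicate (v+1) b with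
    | nil => exact absurd h (by simp)
    | cons y l => exact ⟨y, l, rfl⟩
  rw [h1, hyl, hkey y l hyl.symm, ← hyl]
  congr 3
  rw [List.dropLast_append_of_ne_nil (l := List.replicate (v+1) b) (by simp), List.dropLast_replicate]
  rfl
open Set

lemma chain'_append_singleton {L : List ℝ} {b : ℝ} (h : List.Chain' (· < ·) L)
    (hb : ∀ x ∈ L, x < b) : List.Chain' (· < ·) (L ++ [b]) := by
  rw [List.Chain', List.isChain_append]
  exact ⟨h, List.isChain_singleton b, fun x hx y hy => by
    simp only [List.head?_cons, Option.mem_def, Option.some.injEq] at hy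
    subst hy; exact hb x (List.mem_of_mem_getLast? hx)⟩

lemma chain'_cons_of_lt {M : List ℝ} {a : ℝ} (h : List.Chain' (· < ·) M)
    (ha : ∀ x ∈ M, a < x) : List.Chain' (· < ·) (a :: M) :=
  List.isChain_cons.mpr ⟨fun y hy => ha y (List.mem_of_mem_head? hy), h⟩

lemma rolleChain {h : ℝ → ℝ} {a b : ℝ} (hc : ContinuousOn h (Icc a b)) :
    ∀ (Z : List ℝ) (z : ℝ), List.Chain' (· < ·) (z :: Z) → (∀ x ∈ z :: Z, x ∈ Icc a b) →
    (∀ x ∈ z :: Z, h x = 0) →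
    ∃ L' : List ℝ, L'.length = Z.length ∧ List.Chain' (· < ·) L' ∧
      (∀ y ∈ L', z < y ∧ y ∈ Ioo a b ∧ deriv h y = 0) := by
  intro Z
  induction Z with
  | nil => exact fun z _ _ _ => ⟨[], rfl, List.isChain_nil, by simp⟩
  | cons w rest ih =>
    intro z hch hmem hzero
    have hzw : z < w := List.isChain_cons_cons.mp hch |>.1
    have hz : z ∈ Icc a b := hmem z (by simp)
    have hw : w ∈ Icc a b := hmem w (by simp)
    obtain ⟨c, hc1, hc2⟩ := exists_deriv_eq_zero hzw
      (hc.mono (Icc_subset_Icc hz.1 hw.2))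
      ((hzero z (by simp)).trans (hzero w (by simp)).symm)
    obtain ⟨L'', hl1, hl2, hl3⟩ := ih w (List.isChain_cons_cons.mp hch).2
      (fun x hx => hmem x (List.mem_cons_of_mem z hx))
      (fun x hx => hzero x (List.mem_cons_of_mem z hx))
    refine ⟨c :: L'', by simp [hl1], ?_, ?_⟩
    · exact chain'_cons_of_lt hl2 (fun y hy => lt_trans hc1.2 (hl3 y hy).1)
    · intro y hy
      rcases List.mem_cons.mp hy with rfl | hy
      · exact ⟨hc1.1, ⟨lt_of_le_of_lt hz.1 hc1.1, lt_of_lt_of_le hc1.2 hw.2⟩, hc2⟩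
      · obtain ⟨h1, h2, h3⟩ := hl3 y hy
        exact ⟨lt_trans hzw h1, h2, h3⟩

lemma rolleAux {a b : ℝ} (hab : a < b) :
    ∀ (N : ℕ) (h : ℝ → ℝ) (p q : ℕ) (L : List ℝ),
    ContDiffOn ℝ N h (Icc a b) →
    p + q + L.length = N + 1 →
    (∀ j, j < p → iteratedDerivWithin j h (Icc a b) a = 0) →
    (∀ j, j < q → iteratedDerivWithin j h (Icc a b) b = 0) →
    (∀ x ∈ L, x ∈ Ioo a b) → List.Chain' (· < ·) L → (∀ x ∈ L, h x = 0) →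
    ∃ ξ ∈ Icc a b, iteratedDerivWithin N h (Icc a b) ξ = 0 := by
  have hs : UniqueDiffOn ℝ (Icc a b) := uniqueDiffOn_Icc hab
  have haI : a ∈ Icc a b := ⟨le_refl a, hab.le⟩
  have hbI : b ∈ Icc a b := ⟨hab.le, le_refl b⟩
  intro N
  induction N with
  | zero =>
    intro h p q L _ hcount hpa hqb hLmem _ hLzero
    rcases Nat.eq_zero_or_pos p with hp | hp
    · rcases Nat.eq_zero_or_pos q with hq | hq
      · subst hp; subst hq
        match L, hcount with
        | [x], _ =>
          exact ⟨x, Ioo_subset_Icc_self (hLmem x (by simp)),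
            by rw [iteratedDerivWithin_zero]; exact hLzero x (by simp)⟩
      · exact ⟨b, hbI, by simpa [iteratedDerivWithin_zero] using hqb 0 hq⟩
    · exact ⟨a, haI, by simpa [iteratedDerivWithin_zero] using hpa 0 hp⟩
  | succ N ih =>
    intro h p q L hcd hcount hpa hqb hLmem hLch hLzero
    have hIoo_mem : ∀ x ∈ L, x ∈ Icc a b := fun x hx => Ioo_subset_Icc_self (hLmem x hx)
    -- first, append b if q > 0
    obtain ⟨M, hMlen, hMch, hMmem, hMzero⟩ :
        ∃ M : List ℝ, M.length = L.length + (if 0 < q then 1 else 0) ∧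
          List.Chain' (· < ·) M ∧ (∀ x ∈ M, x ∈ Icc a b ∧ a < x) ∧ (∀ x ∈ M, h x = 0) := by
      rcases Nat.eq_zero_or_pos q with hq | hq
      · exact ⟨L, by simp [hq], hLch,
          fun x hx => ⟨hIoo_mem x hx, (hLmem x hx).1⟩, hLzero⟩
      · refine ⟨L ++ [b], by simp [hq], chain'_append_singleton hLch (fun x hx => (hLmem x hx).2),
          ?_, ?_⟩
        · intro x hx
          rcases List.mem_append.mp hx with hx | hx
          · exact ⟨hIoo_mem x hx, (hLmem x hx).1⟩
          · simp only [List.mem_singleton] at hx; subst hx; exact ⟨hbI, hab⟩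
        · intro x hx
          rcases List.mem_append.mp hx with hx | hx
          · exact hLzero x hx
          · simp only [List.mem_singleton] at hx; subst hx
            simpa [iteratedDerivWithin_zero] using hqb 0 hq
    obtain ⟨Z, hZlen, hZch, hZmem, hZzero⟩ :
        ∃ Z : List ℝ, Z.length = (if 0 < p then 1 else 0) + M.length ∧
          List.Chain' (· < ·) Z ∧ (∀ x ∈ Z, x ∈ Icc a b) ∧ (∀ x ∈ Z, h x = 0) := by
      rcases Nat.eq_zero_or_pos p with hp | hp
      · exact ⟨M, by simp [hp], hMch, fun x hx => (hMmem x hx).1, hMzero⟩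
      · refine ⟨a :: M, by simp [hp, Nat.add_comm], chain'_cons_of_lt hMch (fun x hx => (hMmem x hx).2),
          ?_, ?_⟩
        · intro x hx
          rcases List.mem_cons.mp hx with rfl | hx
          · exact haI
          · exact (hMmem x hx).1
        · intro x hx
          rcases List.mem_cons.mp hx with rfl | hx
          · simpa [iteratedDerivWithin_zero] using hpa 0 hp
          · exact hMzero x hx
    -- Z is nonempty
    have hZpos : Z ≠ [] := by
      apply List.ne_nil_of_length_pos
      rw [hZlen, hMlen]
      split_ifs <;> omega
    obtain ⟨z, Z₀, rfl⟩ := List.exists_cons_of_ne_nil hZpos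
    obtain ⟨L', hL'len, hL'ch, hL'props⟩ := rolleChain hcd.continuousOn _ z hZch hZmem hZzero
    -- apply IH to derivWithin h (Icc a b)
    have hcd' : ContDiffOn ℝ N (derivWithin h (Icc a b)) (Icc a b) := by
      apply hcd.derivWithin hs
      exact_mod_cast le_refl _
    have hcount' : (p - 1) + (q - 1) + L'.length = N + 1 := by
      rw [hL'len]
      simp only [List.length_cons] at hZlen
      split_ifs at hZlen hMlen <;> omega
    refine ?_
    obtain ⟨ξ, hξ1, hξ2⟩ := ih (derivWithin h (Icc a b)) (p-1) (q-1) L' hcd' hcount'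
      (fun j hj => by
        rw [← iteratedDerivWithin_succ']
        exact hpa (j+1) (by omega))
      (fun j hj => by
        rw [← iteratedDerivWithin_succ']
        exact hqb (j+1) (by omega))
      (fun x hx => (hL'props x hx).2.1) hL'ch
      (fun x hx => by
        have ⟨_, hx2, hx3⟩ := hL'props x hx
        rw [derivWithin_of_mem_nhds (Icc_mem_nhds hx2.1 hx2.2)]
        exact hx3)
    exact ⟨ξ, hξ1, by rw [iteratedDerivWithin_succ']; exact hξ2⟩
open Polynomial Set

lemma iter_deriv_sum {ι : Type*} (S : Finset ι) (F : ι → ℝ[X]) (j : ℕ) :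
    derivative^[j] (∑ k ∈ S, F k) = ∑ k ∈ S, derivative^[j] (F k) := by
  induction j with
  | zero => simp
  | succ j ih =>
    rw [Function.iterate_succ_apply', ih, derivative_sum]
    exact Finset.sum_congr rfl fun k _ => (Function.iterate_succ_apply' _ _ _).symm

/-- derivatives of `(X-c)^u * r` up to order `< u` keep a factor `(X-c)`. -/
lemma iter_deriv_factor (c : ℝ) (u : ℕ) (r : ℝ[X]) :
    ∀ j, j ≤ u → ∃ r' : ℝ[X], derivative^[j] ((X - C c)^u * r) = (X - C c)^(u-j) * r' := by
  intro j
  induction j with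
  | zero => exact fun _ => ⟨r, rfl⟩
  | succ j ih =>
    intro hj
    obtain ⟨r', hr'⟩ := ih (by omega)
    refine ⟨C ((u - j : ℕ) : ℝ) * r' + (X - C c) * derivative r', ?_⟩
    rw [Function.iterate_succ_apply', hr', derivative_mul, derivative_pow, derivative_X_sub_C]
    have : u - j = (u - (j+1)) + 1 := by omega
    rw [this]
    push_cast
    ring

lemma eval_iter_deriv_factor {c : ℝ} {u j : ℕ} (r : ℝ[X]) (hj : j < u) :
    eval c (derivative^[j] ((X - C c)^u * r)) = 0 := by
  obtain ⟨r', hr'⟩ := iter_deriv_factor c u r j hj.le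
  rw [hr', eval_mul, eval_pow, eval_sub, eval_X, eval_C, sub_self,
    zero_pow (by omega), zero_mul]

lemma eval_iter_deriv_taylor (c : ℝ) (cs : ℕ → ℝ) (u j : ℕ) (hj : j < u) :
    eval c (derivative^[j] (∑ k ∈ Finset.range u, C (cs k) * (X - C c)^k))
      = cs j * Nat.factorial j := by
  rw [iter_deriv_sum]
  rw [eval_finset_sum]
  rw [Finset.sum_eq_single j]
  · rw [iterate_derivative_C_mul, iterate_derivative_X_sub_pow, Nat.descFactorial_self]
    simp
  · intro k _ hk
    rw [iterate_derivative_C_mul, iterate_derivative_X_sub_pow]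
    rcases lt_or_gt_of_ne hk with h | h
    · simp [Nat.descFactorial_eq_zero_iff_lt.mpr h]
    · simp [zero_pow, Nat.sub_ne_zero_of_lt h]
  · intro h
    exact absurd (Finset.mem_range.mpr hj) h

lemma natDegree_term_le (c x y : ℝ) (i k : ℕ) :
    ((C c * (X - C x)^i * (X - C y)^k : ℝ[X])).natDegree ≤ i + k := by
  refine le_trans (natDegree_mul_le) ?_
  have h1 : ((C c * (X - C x)^i : ℝ[X])).natDegree ≤ i := by
    refine le_trans (natDegree_mul_le) ?_
    simp [natDegree_pow, natDegree_X_sub_C]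
  have h2 : (((X - C y)^k : ℝ[X])).natDegree ≤ k := by
    simp [natDegree_pow, natDegree_X_sub_C]
  omega

lemma iter_deriv_omega (x y : ℝ) (u v : ℕ) :
    derivative^[u+v] ((X - C x)^u * (X - C y)^v : ℝ[X]) = C ((u+v).factorial : ℝ) := by
  set p : ℝ[X] := (X - C x)^u * (X - C y)^v with hp
  have hmonic : p.Monic := ((monic_X_sub_C x).pow u).mul ((monic_X_sub_C y).pow v)
  have hdeg : p.natDegree = u + v := by
    rw [hp, natDegree_mul (((monic_X_sub_C x).pow u).ne_zero) (((monic_X_sub_C y).pow v).ne_zero)]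
    simp [natDegree_pow, natDegree_X_sub_C]
  have h1 : (derivative^[u+v] p).natDegree ≤ 0 := by
    refine le_trans (natDegree_iterate_derivative p (u+v)) (by omega)
  rw [eq_C_of_natDegree_le_zero h1, coeff_iterate_derivative, Nat.zero_add,
    Nat.descFactorial_self]
  have : p.coeff (u+v) = 1 := by
    rw [← hdeg]; exact hmonic.coeff_natDegree
  rw [this]
  simp
open Polynomial Set

-- satisfying the recursion; we'll instantiate with divDiff later.
section QP
variable (f : ℝ → ℝ) (s : Set ℝ) (a b : ℝ)

noncomputable def QP : ℕ → ℕ → Polynomial ℝ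
  | u, 0 => ∑ k ∈ Finset.range u, C (iteratedDerivWithin k f s a / Nat.factorial k) * (X - C a)^k
  | 0, v+1 => ∑ k ∈ Finset.range (v+1), C (iteratedDerivWithin k f s b / Nat.factorial k) * (X - C b)^k
  | u+1, v+1 => C (b-a)⁻¹ * ((X - C a) * QP u (v+1) - (X - C b) * QP (u+1) v)
termination_by u v => u + v

lemma QP_u0 (u : ℕ) : QP f s a b u 0
    = ∑ k ∈ Finset.range u, C (iteratedDerivWithin k f s a / Nat.factorial k) * (X - C a)^k := by
  rw [QP]

lemma QP_0v (v : ℕ) : QP f s a b 0 v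
    = ∑ k ∈ Finset.range v, C (iteratedDerivWithin k f s b / Nat.factorial k) * (X - C b)^k := by
  cases v with
  | zero => rw [QP]; simp
  | succ v => rw [QP]

end QP

section diff
variable {f : ℝ → ℝ} {s : Set ℝ} {a b : ℝ} (hab : a ≠ b) (d : ℕ → ℕ → ℝ)
  (hd_a : ∀ u, d (u+1) 0 = iteratedDerivWithin u f s a / Nat.factorial u)
  (hd_b : ∀ v, d 0 (v+1) = iteratedDerivWithin v f s b / Nat.factorial v)
  (hd_rec : ∀ u v, d (u+1) (v+1) = (d u (v+1) - d (u+1) v) / (b - a))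

include hab hd_a hd_b hd_rec

lemma QP_diff : ∀ (w u v : ℕ), u + v = w →
    (QP f s a b u (v+1) - QP f s a b u v = C (d u (v+1)) * (X - C a)^u * (X - C b)^v) ∧
    (QP f s a b (u+1) v - QP f s a b u v = C (d (u+1) v) * (X - C a)^u * (X - C b)^v) := by
  have hba : b - a ≠ 0 := sub_ne_zero.mpr (Ne.symm hab)
  have key : (C (b-a)⁻¹ : ℝ[X]) * (C b - C a) = 1 := by
    rw [← C_sub, ← C_mul, inv_mul_cancel₀ hba, C_1]
  intro w
  induction w using Nat.strong_induction_on with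
  | _ w ihw =>
    rintro u v rfl
    constructor
    · -- N1
      cases u with
      | zero =>
        rw [QP_0v, QP_0v, Finset.sum_range_succ, hd_b]
        ring
      | succ u' =>
        have e1 : QP f s a b u' (v+1) - QP f s a b (u'+1) v
            = (C (d u' (v+1)) - C (d (u'+1) v)) * (X - C a)^u' * (X - C b)^v := by
          have h1 := (ihw (u' + v) (by omega) u' v rfl).1
          have h2 := (ihw (u' + v) (by omega) u' v rfl).2
          linear_combination h1 - h2
        have e3 : C (d u' (v+1)) - C (d (u'+1) v)
            = C (d (u'+1) (v+1)) * (C b - C a) := by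
          rw [← C_sub, ← C_sub, ← C_mul]
          congr 1
          rw [hd_rec]
          field_simp
        rw [QP]
        linear_combination (C (b-a)⁻¹ * (X - C a)) * e1
          + (C (b-a)⁻¹ * (X - C a) * (X - C a)^u' * (X - C b)^v) * e3
          + (QP f s a b (u'+1) v + C (d (u'+1) (v+1)) * (X - C a)^(u'+1) * (X - C b)^v) * key
    · -- N2
      cases v with
      | zero =>
        rw [QP_u0, QP_u0, Finset.sum_range_succ, hd_a]
        ring
      | succ v' =>
        have e1 : QP f s a b u (v'+1) - QP f s a b (u+1) v'
            = (C (d u (v'+1)) - C (d (u+1) v')) * (X - C a)^u * (X - C b)^v' := by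
          have h1 := (ihw (u + v') (by omega) u v' rfl).1
          have h2 := (ihw (u + v') (by omega) u v' rfl).2
          linear_combination h1 - h2
        have e3 : C (d u (v'+1)) - C (d (u+1) v')
            = C (d (u+1) (v'+1)) * (C b - C a) := by
          rw [← C_sub, ← C_sub, ← C_mul]
          congr 1
          rw [hd_rec]
          field_simp
        rw [QP]
        linear_combination (C (b-a)⁻¹ * (X - C b)) * e1
          + (C (b-a)⁻¹ * (X - C a)^u * (X - C b)^(v'+1)) * e3
          + (QP f s a b u (v'+1) + C (d (u+1) (v'+1)) * (X - C a)^u * (X - C b)^(v'+1)) * key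

lemma QP_newton_a (u v : ℕ) : QP f s a b u v = QP f s a b u 0
    + ∑ k ∈ Finset.range v, C (d u (k+1)) * (X - C a)^u * (X - C b)^k := by
  induction v with
  | zero => simp
  | succ v ih =>
    rw [Finset.sum_range_succ, ← add_assoc, ← ih]
    have := (QP_diff hab d hd_a hd_b hd_rec (u+v) u v rfl).1
    linear_combination this

lemma QP_newton_b (u v : ℕ) : QP f s a b u v = QP f s a b 0 v
    + ∑ k ∈ Finset.range u, C (d (k+1) v) * (X - C a)^k * (X - C b)^v := by
  induction u with
  | zero => simp
  | succ u ih =>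
    rw [Finset.sum_range_succ, ← add_assoc, ← ih]
    have := (QP_diff hab d hd_a hd_b hd_rec (u+v) u v rfl).2
    linear_combination this

end diff
section
lemma poly_contDiff (p : ℝ[X]) {n : WithTop ℕ∞} : ContDiff ℝ n fun x => p.eval x := by
  induction p using Polynomial.induction_on' with
  | add p q hp hq => simpa [eval_add] using hp.add hq
  | monomial k c => simpa [eval_monomial] using (contDiff_const (c := c)).mul ((contDiff_id (𝕜 := ℝ)).pow k)

lemma polyIDW (p : Polynomial ℝ) {s : Set ℝ} (hs : UniqueDiffOn ℝ s) (n : ℕ) :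
    ∀ x ∈ s, iteratedDerivWithin n (fun y => p.eval y) s x = (derivative^[n] p).eval x := by
  induction n generalizing p with
  | zero => intro x hx; simp
  | succ n ih =>
    intro x hx
    rw [iteratedDerivWithin_succ']
    rw [iteratedDerivWithin_congr (g := fun y => (derivative p).eval y) ?_ hx]
    · rw [ih (derivative p) x hx, Function.iterate_succ_apply]
    · intro y hy
      rw [DifferentiableAt.derivWithin (Polynomial.differentiableAt p) (hs y hy)]
      exact Polynomial.deriv p

lemma idw_sub_poly {f : ℝ → ℝ} {s : Set ℝ} (hs : UniqueDiffOn ℝ s) {x : ℝ} (hx : x ∈ s)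
    {j : ℕ} (hf : ContDiffOn ℝ j f s) (p : ℝ[X]) :
    iteratedDerivWithin j (f - fun y => eval y p) s x
      = iteratedDerivWithin j f s x - eval x (derivative^[j] p) := by
  rw [iteratedDerivWithin_sub hx hs (hf x hx) ((poly_contDiff p).contDiffOn x hx), polyIDW p hs j x hx]
end

lemma iter_deriv_add (j : ℕ) (p q : ℝ[X]) :
    derivative^[j] (p + q) = derivative^[j] p + derivative^[j] q := by
  induction j generalizing p q with
  | zero => rfl
  | succ j ih =>
    rw [Function.iterate_succ_apply, Function.iterate_succ_apply, Function.iterate_succ_apply,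
      derivative_add, ih]

section diff2
variable {f : ℝ → ℝ} {s : Set ℝ} {a b : ℝ} (hab : a ≠ b) (d : ℕ → ℕ → ℝ)
  (hd_a : ∀ u, d (u+1) 0 = iteratedDerivWithin u f s a / Nat.factorial u)
  (hd_b : ∀ v, d 0 (v+1) = iteratedDerivWithin v f s b / Nat.factorial v)
  (hd_rec : ∀ u v, d (u+1) (v+1) = (d u (v+1) - d (u+1) v) / (b - a))

include hab hd_a hd_b hd_rec

lemma QP_deriv_a (u v j : ℕ) (hj : j < u) :
    eval a (derivative^[j] (QP f s a b u v)) = iteratedDerivWithin j f s a := by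
  rw [QP_newton_a hab d hd_a hd_b hd_rec u v, iter_deriv_add, eval_add, QP_u0,
    eval_iter_deriv_taylor a _ u j hj, iter_deriv_sum, eval_finset_sum]
  have hz : ∀ k ∈ Finset.range v,
      eval a (derivative^[j] (C (d u (k+1)) * (X - C a)^u * (X - C b)^k)) = 0 := by
    intro k _
    have hre : C (d u (k+1)) * (X - C a)^u * (X - C b)^k
        = (X - C a)^u * (C (d u (k+1)) * (X - C b)^k) := by ring
    rw [hre]
    exact eval_iter_deriv_factor _ hj
  rw [Finset.sum_congr rfl hz, Finset.sum_const, smul_zero, add_zero,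
    div_mul_cancel₀]
  exact_mod_cast (Nat.factorial_pos j).ne'

lemma QP_deriv_b (u v j : ℕ) (hj : j < v) :
    eval b (derivative^[j] (QP f s a b u v)) = iteratedDerivWithin j f s b := by
  rw [QP_newton_b hab d hd_a hd_b hd_rec u v, iter_deriv_add, eval_add, QP_0v,
    eval_iter_deriv_taylor b _ v j hj, iter_deriv_sum, eval_finset_sum]
  have hz : ∀ k ∈ Finset.range u,
      eval b (derivative^[j] (C (d (k+1) v) * (X - C a)^k * (X - C b)^v)) = 0 := by
    intro k _
    have hre : C (d (k+1) v) * (X - C a)^k * (X - C b)^v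
        = (X - C b)^v * (C (d (k+1) v) * (X - C a)^k) := by ring
    rw [hre]
    exact eval_iter_deriv_factor _ hj
  rw [Finset.sum_congr rfl hz, Finset.sum_const, smul_zero, add_zero,
    div_mul_cancel₀]
  exact_mod_cast (Nat.factorial_pos j).ne'

lemma QP_natDegree_lt (u v : ℕ) (hu : 1 ≤ u) :
    (QP f s a b u v).natDegree < u + v := by
  rw [QP_newton_a hab d hd_a hd_b hd_rec u v]
  have h1 : (QP f s a b u 0).natDegree < u + v := by
    rw [QP_u0]
    refine lt_of_le_of_lt (natDegree_sum_le_of_forall_le _ _ fun k hk => ?_) (by omega : u - 1 < u + v)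
    refine le_trans natDegree_mul_le ?_
    have : ((X - C a)^k : ℝ[X]).natDegree ≤ k := by
      simp [natDegree_pow, natDegree_X_sub_C]
    have hk' := Finset.mem_range.mp hk
    simp only [natDegree_C]
    omega
  have h2 : (∑ k ∈ Finset.range v, C (d u (k+1)) * (X - C a)^u * (X - C b)^k).natDegree < u + v := by
    rcases Nat.eq_zero_or_pos v with rfl | hv
    · simp; omega
    refine lt_of_le_of_lt (natDegree_sum_le_of_forall_le _ _ fun k hk => ?_)
      (by omega : u + (v-1) < u + v)
    refine le_trans (natDegree_term_le _ _ _ _ _) ?_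
    have hk' := Finset.mem_range.mp hk
    omega
  exact lt_of_le_of_lt (natDegree_add_le _ _) (max_lt h1 h2)

lemma QP_topderiv_zero (u v : ℕ) (hu : 1 ≤ u) :
    derivative^[u + v] (QP f s a b u v) = 0 :=
  iterate_derivative_eq_zero (QP_natDegree_lt hab d hd_a hd_b hd_rec u v hu)

end diff2

noncomputable def ddf (f : ℝ → ℝ) (s : Set ℝ) (a b : ℝ) (u v : ℕ) : ℝ :=
  divDiff s f (List.replicate u a ++ List.replicate v b)

lemma ddf_a (f : ℝ → ℝ) (s : Set ℝ) (a b : ℝ) (u : ℕ) :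
    ddf f s a b (u+1) 0 = iteratedDerivWithin u f s a / Nat.factorial u := by
  rw [ddf, List.replicate, List.append_nil]
  exact divDiff_replicate s f a u

lemma ddf_b (f : ℝ → ℝ) (s : Set ℝ) (a b : ℝ) (v : ℕ) :
    ddf f s a b 0 (v+1) = iteratedDerivWithin v f s b / Nat.factorial v := by
  rw [ddf, List.replicate, List.nil_append]
  exact divDiff_replicate s f b v

lemma ddf_rec (f : ℝ → ℝ) (s : Set ℝ) {a b : ℝ} (hab : a ≠ b) (u v : ℕ) :
    ddf f s a b (u+1) (v+1) = (ddf f s a b u (v+1) - ddf f s a b (u+1) v) / (b - a) := by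
  simp only [ddf]
  exact divDiff_rec s f hab u v

lemma err_eq {a b : ℝ} (hab : a < b) (u v : ℕ) (hu : 1 ≤ u) (hv : 1 ≤ v)
    (f : ℝ → ℝ) (hf : ContDiffOn ℝ (u + v : ℕ) f (Icc a b))
    (hconv : ∀ y ∈ Icc a b, 0 ≤ iteratedDerivWithin (u+v) f (Icc a b) y)
    (x : ℝ) (hx : x ∈ Icc a b) :
    ∃ lam : ℝ, 0 ≤ lam ∧
      f x - eval x (QP f (Icc a b) a b u v) = lam * ((x - a)^u * (x - b)^v) := by
  have hs : UniqueDiffOn ℝ (Icc a b) := uniqueDiffOn_Icc hab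
  have hne : a ≠ b := ne_of_lt hab
  have haI : a ∈ Icc a b := left_mem_Icc.mpr hab.le
  have hbI : b ∈ Icc a b := right_mem_Icc.mpr hab.le
  set dd := ddf f (Icc a b) a b with hdd
  have hd_a := ddf_a f (Icc a b) a b
  have hd_b := ddf_b f (Icc a b) a b
  have hd_rec := ddf_rec f (Icc a b) (a := a) (b := b) hne
  rcases eq_or_lt_of_le hx.1 with hax | hax
  · refine ⟨0, le_refl 0, ?_⟩
    have h0 := QP_deriv_a hne dd hd_a hd_b hd_rec u v 0 (by omega)
    simp only [Function.iterate_zero, id_eq, iteratedDerivWithin_zero] at h0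
    rw [← hax, h0]
    ring
  rcases eq_or_lt_of_le hx.2 with hbx | hbx
  · refine ⟨0, le_refl 0, ?_⟩
    have h0 := QP_deriv_b hne dd hd_a hd_b hd_rec u v 0 (by omega)
    simp only [Function.iterate_zero, id_eq, iteratedDerivWithin_zero] at h0
    rw [hbx, h0]
    ring
  -- interior case
  have hxI : x ∈ Ioo a b := ⟨hax, hbx⟩
  set w : ℝ[X] := (X - C a)^u * (X - C b)^v with hw
  have hwx : eval x w = (x - a)^u * (x - b)^v := by simp [hw]
  have hw0 : eval x w ≠ 0 := by
    rw [hwx]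
    exact mul_ne_zero (pow_ne_zero _ (sub_ne_zero.mpr (ne_of_gt hax)))
      (pow_ne_zero _ (sub_ne_zero.mpr (ne_of_lt hbx)))
  set lam := (f x - eval x (QP f (Icc a b) a b u v)) / eval x w with hlam
  set R : ℝ[X] := QP f (Icc a b) a b u v + C lam * w with hR
  set ψ : ℝ → ℝ := f - fun y => eval y R with hψ
  have hψcd : ContDiffOn ℝ (u+v) ψ (Icc a b) := hf.sub (poly_contDiff R).contDiffOn
  have hψa : ∀ j, j < u → iteratedDerivWithin j ψ (Icc a b) a = 0 := by
    intro j hj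
    rw [hψ, idw_sub_poly hs haI (hf.of_le (by exact_mod_cast Nat.le_of_lt (by omega))) R,
      hR, iter_deriv_add, eval_add, QP_deriv_a hne dd hd_a hd_b hd_rec u v j hj,
      iterate_derivative_C_mul, eval_mul, eval_C, hw,
      eval_iter_deriv_factor ((X - C b)^v) hj]
    ring
  have hψb : ∀ j, j < v → iteratedDerivWithin j ψ (Icc a b) b = 0 := by
    intro j hj
    have hwc : w = (X - C b)^v * (X - C a)^u := by rw [hw]; ring
    rw [hψ, idw_sub_poly hs hbI (hf.of_le (by exact_mod_cast Nat.le_of_lt (by omega))) R,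
      hR, iter_deriv_add, eval_add, QP_deriv_b hne dd hd_a hd_b hd_rec u v j hj,
      iterate_derivative_C_mul, eval_mul, eval_C, hwc,
      eval_iter_deriv_factor ((X - C a)^u) hj]
    ring
  have hψx : ψ x = 0 := by
    rw [hψ]
    simp only [Pi.sub_apply, hR, eval_add, eval_mul, eval_C]
    rw [hlam, div_mul_cancel₀ _ hw0]
    ring
  obtain ⟨ξ, hξI, hξ0⟩ := rolleAux hab (u+v) ψ u v [x] hψcd (by simp)
    hψa hψb (by simpa using hxI) (List.isChain_singleton x) (by simpa using hψx)
  rw [hψ, idw_sub_poly hs hξI hf R, hR, iter_deriv_add, eval_add,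
    QP_topderiv_zero hne dd hd_a hd_b hd_rec u v hu,
    iterate_derivative_C_mul, hw, iter_deriv_omega, eval_zero, eval_mul, eval_C, eval_C] at hξ0
  have hfact : (0:ℝ) < ((u+v).factorial : ℝ) := by exact_mod_cast Nat.factorial_pos _
  have hlamval : lam * ((u+v).factorial : ℝ) = iteratedDerivWithin (u+v) f (Icc a b) ξ := by
    linarith
  have hlampos : 0 ≤ lam := by
    have h1 := hconv ξ hξI
    nlinarith
  exact ⟨lam, hlampos, by rw [← hwx, hlam, div_mul_cancel₀ _ hw0]⟩

lemma divDiff_single (s : Set ℝ) (f : ℝ → ℝ) (c : ℝ) : divDiff s f [c] = f c := by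
  rw [divDiff]

/-- Corollary 2.1: two-sided Edmundson–Lah–Ribarič type bounds for `n`-convex
functions with `n` odd and `3 ≤ m ≤ n-1` odd. -/
theorem cor21 {E : Type*} [Nonempty E]
    (a b : ℝ) (hab : a < b) (n m : ℕ) (hnodd : Odd n) (hm : 3 ≤ m) (hmn : m + 1 ≤ n)
    (hmodd : Odd m)
    (f : ℝ → ℝ) (hf : ContDiffOn ℝ n f (Set.Icc a b))
    (hconv : ∀ x ∈ Set.Icc a b, 0 ≤ iteratedDerivWithin n f (Set.Icc a b) x)
    (A : (E → ℝ) →ₗ[ℝ] ℝ)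
    (hApos : ∀ h : E → ℝ, (∀ t, 0 ≤ h t) → 0 ≤ A h)
    (hA1 : A (fun _ => (1 : ℝ)) = 1)
    (g : E → ℝ) (hg : ∀ t, g t ∈ Set.Icc a b) :
    (A g - a) * (divDiff (Set.Icc a b) f [a, a] - divDiff (Set.Icc a b) f [a, b]) +
      (∑ k ∈ Finset.Icc 2 (m - 1),
        iteratedDerivWithin k f (Set.Icc a b) a / Nat.factorial k *
          A (fun t => (g t - a) ^ k)) +
      (∑ k ∈ Finset.Icc 1 (n - m),
        divDiff (Set.Icc a b) f (List.replicate m a ++ List.replicate k b) *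
          A (fun t => (g t - a) ^ m * (g t - b) ^ (k - 1))) ≤
    A (fun t => f (g t)) - (b - A g) / (b - a) * f a - (A g - a) / (b - a) * f b ∧
    A (fun t => f (g t)) - (b - A g) / (b - a) * f a - (A g - a) / (b - a) * f b ≤
      (b - A g) * (divDiff (Set.Icc a b) f [a, b] - divDiff (Set.Icc a b) f [b, b]) +
      (∑ k ∈ Finset.Icc 2 (m - 1),
        iteratedDerivWithin k f (Set.Icc a b) b / Nat.factorial k *
          A (fun t => (g t - b) ^ k)) +
      ∑ k ∈ Finset.Icc 1 (n - m),
        divDiff (Set.Icc a b) f (List.replicate k a ++ List.replicate m b) *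
          A (fun t => (g t - b) ^ m * (g t - a) ^ (k - 1)) := by
  have hne : a ≠ b := ne_of_lt hab
  have hba : b - a ≠ 0 := sub_ne_zero.mpr hne.symm
  have hqeven : Even (n - m) := Nat.Odd.sub_odd hnodd hmodd
  have hmn' : m + (n - m) = n := by omega
  have hmn'' : (n - m) + m = n := by omega
  have hd_a := ddf_a f (Set.Icc a b) a b
  have hd_b := ddf_b f (Set.Icc a b) a b
  have hd_rec := ddf_rec f (Set.Icc a b) (a := a) (b := b) hne
  have hf' : ContDiffOn ℝ (m + (n-m) : ℕ) f (Set.Icc a b) := by rw [hmn']; exact hf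
  have hconv' : ∀ y ∈ Set.Icc a b, 0 ≤ iteratedDerivWithin (m + (n-m)) f (Set.Icc a b) y := by
    rw [hmn']; exact hconv
  have hf'' : ContDiffOn ℝ ((n-m) + m : ℕ) f (Set.Icc a b) := by rw [hmn'']; exact hf
  have hconv'' : ∀ y ∈ Set.Icc a b, 0 ≤ iteratedDerivWithin ((n-m) + m) f (Set.Icc a b) y := by
    rw [hmn'']; exact hconv
  -- divided difference basic values
  have hdaa : divDiff (Set.Icc a b) f [a, a] = iteratedDerivWithin 1 f (Set.Icc a b) a := by
    have h := divDiff_replicate (Set.Icc a b) f a 1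
    simpa using h
  have hdbb : divDiff (Set.Icc a b) f [b, b] = iteratedDerivWithin 1 f (Set.Icc a b) b := by
    have h := divDiff_replicate (Set.Icc a b) f b 1
    simpa using h
  have hdab : divDiff (Set.Icc a b) f [a, b] = (f b - f a) / (b - a) := by
    have h := divDiff_rec (Set.Icc a b) f hne 0 0
    simpa [divDiff_single] using h
  -- A-evaluation lemmas
  have hA0a : A (fun t => (g t - a)^0) = 1 := by
    have : (fun t => (g t - a)^0) = fun _ => (1:ℝ) := by funext t; simp
    rw [this, hA1]
  have hA0b : A (fun t => (g t - b)^0) = 1 := by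
    have : (fun t => (g t - b)^0) = fun _ => (1:ℝ) := by funext t; simp
    rw [this, hA1]
  have hA1a : A (fun t => (g t - a)^1) = A g - a := by
    have : (fun t => (g t - a)^1) = g - (a • fun _ => (1:ℝ)) := by
      funext t; simp
    rw [this, map_sub, map_smul, hA1, smul_eq_mul, mul_one]
  have hA1b : A (fun t => (g t - b)^1) = A g - b := by
    have : (fun t => (g t - b)^1) = g - (b • fun _ => (1:ℝ)) := by
      funext t; simp
    rw [this, map_sub, map_smul, hA1, smul_eq_mul, mul_one]
  -- pointwise bounds
  have hlow : ∀ t, eval (g t) (QP f (Set.Icc a b) a b m (n-m)) ≤ f (g t) := by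
    intro t
    obtain ⟨lam, hl0, hleq⟩ := err_eq hab m (n-m) (by omega) (by omega) f hf' hconv' (g t) (hg t)
    have h1 : 0 ≤ (g t - a)^m := pow_nonneg (by linarith [(hg t).1]) m
    have h2 : 0 ≤ (g t - b)^(n-m) := hqeven.pow_nonneg _
    nlinarith [mul_nonneg hl0 (mul_nonneg h1 h2)]
  have hup : ∀ t, f (g t) ≤ eval (g t) (QP f (Set.Icc a b) a b (n-m) m) := by
    intro t
    obtain ⟨lam, hl0, hleq⟩ := err_eq hab (n-m) m (by omega) (by omega) f hf'' hconv'' (g t) (hg t)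
    have h1 : 0 ≤ (g t - a)^(n-m) := pow_nonneg (by linarith [(hg t).1]) _
    have h2 : (g t - b)^m ≤ 0 := hmodd.pow_nonpos (by linarith [(hg t).2])
    nlinarith [mul_nonneg hl0 h1]
  -- A inequalities
  have hAlow : A (fun t => eval (g t) (QP f (Set.Icc a b) a b m (n-m))) ≤ A (fun t => f (g t)) := by
    have h := hApos ((fun t => f (g t)) - fun t => eval (g t) (QP f (Set.Icc a b) a b m (n-m)))
      (fun t => by simpa using sub_nonneg.mpr (hlow t))
    rw [map_sub] at h
    linarith
  have hAup : A (fun t => f (g t)) ≤ A (fun t => eval (g t) (QP f (Set.Icc a b) a b (n-m) m)) := by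
    have h := hApos ((fun t => eval (g t) (QP f (Set.Icc a b) a b (n-m) m)) - fun t => f (g t))
      (fun t => by simpa using sub_nonneg.mpr (hup t))
    rw [map_sub] at h
    linarith
  -- computation of A ∘ eval QP (lower)
  have hAPlow : A (fun t => eval (g t) (QP f (Set.Icc a b) a b m (n-m)))
      = (∑ k ∈ Finset.range m,
          iteratedDerivWithin k f (Set.Icc a b) a / Nat.factorial k * A (fun t => (g t - a)^k))
        + ∑ k ∈ Finset.range (n-m),
            ddf f (Set.Icc a b) a b m (k+1) * A (fun t => (g t - a)^m * (g t - b)^k) := by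
    have hfun : (fun t => eval (g t) (QP f (Set.Icc a b) a b m (n-m)))
        = (∑ k ∈ Finset.range m,
            (iteratedDerivWithin k f (Set.Icc a b) a / Nat.factorial k) • fun t => (g t - a)^k)
          + ∑ k ∈ Finset.range (n-m),
              (ddf f (Set.Icc a b) a b m (k+1)) • fun t => (g t - a)^m * (g t - b)^k := by
      funext t
      rw [Pi.add_apply, QP_newton_a hne (ddf f (Set.Icc a b) a b) hd_a hd_b hd_rec m (n-m), QP_u0]
      simp only [eval_add, eval_finset_sum, eval_mul, eval_pow, eval_sub, eval_X, eval_C,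
        Finset.sum_apply, Pi.smul_apply, smul_eq_mul]
      congr 1
      exact Finset.sum_congr rfl fun k _ => by ring
    rw [hfun, map_add, map_sum, map_sum]
    simp only [map_smul, smul_eq_mul]
  -- computation of A ∘ eval QP (upper)
  have hAPup : A (fun t => eval (g t) (QP f (Set.Icc a b) a b (n-m) m))
      = (∑ k ∈ Finset.range m,
          iteratedDerivWithin k f (Set.Icc a b) b / Nat.factorial k * A (fun t => (g t - b)^k))
        + ∑ k ∈ Finset.range (n-m),
            ddf f (Set.Icc a b) a b (k+1) m * A (fun t => (g t - b)^m * (g t - a)^k) := by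
    have hfun : (fun t => eval (g t) (QP f (Set.Icc a b) a b (n-m) m))
        = (∑ k ∈ Finset.range m,
            (iteratedDerivWithin k f (Set.Icc a b) b / Nat.factorial k) • fun t => (g t - b)^k)
          + ∑ k ∈ Finset.range (n-m),
              (ddf f (Set.Icc a b) a b (k+1) m) • fun t => (g t - b)^m * (g t - a)^k := by
      funext t
      rw [Pi.add_apply, QP_newton_b hne (ddf f (Set.Icc a b) a b) hd_a hd_b hd_rec (n-m) m, QP_0v]
      simp only [eval_add, eval_finset_sum, eval_mul, eval_pow, eval_sub, eval_X, eval_C,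
        Finset.sum_apply, Pi.smul_apply, smul_eq_mul]
      congr 1
      exact Finset.sum_congr rfl fun k _ => by ring
    rw [hfun, map_add, map_sum, map_sum]
    simp only [map_smul, smul_eq_mul]
  -- splitting of the Taylor sums
  have hsplit : Finset.range m = insert 0 (insert 1 (Finset.Icc 2 (m-1))) := by
    ext x
    simp only [Finset.mem_range, Finset.mem_insert, Finset.mem_Icc]
    omega
  have hnot0 : (0:ℕ) ∉ insert 1 (Finset.Icc 2 (m-1)) := by
    simp only [Finset.mem_insert, Finset.mem_Icc]
    omega
  have hnot1 : (1:ℕ) ∉ Finset.Icc 2 (m-1) := by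
    simp only [Finset.mem_Icc]
    omega
  -- reindexing of the Icc sums in the goal
  have hreidx_low : ∑ k ∈ Finset.Icc 1 (n - m),
        divDiff (Set.Icc a b) f (List.replicate m a ++ List.replicate k b) *
          A (fun t => (g t - a) ^ m * (g t - b) ^ (k - 1))
      = ∑ k ∈ Finset.range (n-m),
          ddf f (Set.Icc a b) a b m (k+1) * A (fun t => (g t - a)^m * (g t - b)^k) := by
    rw [← Finset.Ico_add_one_right_eq_Icc, Finset.sum_Ico_eq_sum_range]
    simp [Nat.add_comm, ddf]
  have hreidx_up : ∑ k ∈ Finset.Icc 1 (n - m),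
        divDiff (Set.Icc a b) f (List.replicate k a ++ List.replicate m b) *
          A (fun t => (g t - b) ^ m * (g t - a) ^ (k - 1))
      = ∑ k ∈ Finset.range (n-m),
          ddf f (Set.Icc a b) a b (k+1) m * A (fun t => (g t - b)^m * (g t - a)^k) := by
    rw [← Finset.Ico_add_one_right_eq_Icc, Finset.sum_Ico_eq_sum_range]
    simp [Nat.add_comm, ddf]
  constructor
  · -- lower bound
    have hkey : (A g - a) * (divDiff (Set.Icc a b) f [a, a] - divDiff (Set.Icc a b) f [a, b]) +
        (∑ k ∈ Finset.Icc 2 (m - 1),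
          iteratedDerivWithin k f (Set.Icc a b) a / Nat.factorial k * A (fun t => (g t - a) ^ k)) +
        (∑ k ∈ Finset.Icc 1 (n - m),
          divDiff (Set.Icc a b) f (List.replicate m a ++ List.replicate k b) *
            A (fun t => (g t - a) ^ m * (g t - b) ^ (k - 1)))
        = A (fun t => eval (g t) (QP f (Set.Icc a b) a b m (n-m)))
          - (b - A g) / (b - a) * f a - (A g - a) / (b - a) * f b := by
      rw [hAPlow, hreidx_low, hsplit, Finset.sum_insert hnot0, Finset.sum_insert hnot1,
        hA0a, hA1a, hdaa, hdab]
      simp only [Nat.factorial_zero, Nat.factorial_one, Nat.cast_one, div_one,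
        iteratedDerivWithin_zero, pow_zero, mul_one]
      field_simp
      ring
    rw [hkey]
    linarith
  · -- upper bound
    have hkey : (b - A g) * (divDiff (Set.Icc a b) f [a, b] - divDiff (Set.Icc a b) f [b, b]) +
        (∑ k ∈ Finset.Icc 2 (m - 1),
          iteratedDerivWithin k f (Set.Icc a b) b / Nat.factorial k * A (fun t => (g t - b) ^ k)) +
        (∑ k ∈ Finset.Icc 1 (n - m),
          divDiff (Set.Icc a b) f (List.replicate k a ++ List.replicate m b) *
            A (fun t => (g t - b) ^ m * (g t - a) ^ (k - 1)))
        = A (fun t => eval (g t) (QP f (Set.Icc a b) a b (n-m) m))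
          - (b - A g) / (b - a) * f a - (A g - a) / (b - a) * f b := by
      rw [hAPup, hreidx_up, hsplit, Finset.sum_insert hnot0, Finset.sum_insert hnot1,
        hA0b, hA1b, hdbb, hdab]
      simp only [Nat.factorial_zero, Nat.factorial_one, Nat.cast_one, div_one,
        iteratedDerivWithin_zero, pow_zero, mul_one]
      field_simp
      ring
    rw [hkey]
    linarith
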